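/- Let M ≥ 2 and let τ ∈ (1/2, 1) satisfy (1/M)^{2τ} + ((M−1)/M)^τ = 1. Define f(x) = x^{2τ} + (1−x)^τ − 1 on [0,1]. Then f(x) ≥ 0 for all x ∈ [1/M, 1]. -/

import Mathlib

open Set Real

noncomputable def F (τ x : ℝ) : ℝ := x ^ (2*τ) + (1-x) ^ τ - 1
noncomputable def F1 (τ x : ℝ) : ℝ := 2*τ * x ^ (2*τ-1) - τ * (1-x) ^ (τ-1)
noncomputable def F2 (τ x : ℝ) : ℝ :=
  (2*τ*(2*τ-1)) * x ^ (2*τ-2) + (τ*(τ-1)) * (1-x) ^ (τ-2)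

lemma F_cont {τ : ℝ} (h0 : 0 < τ) : Continuous (F τ) := by
  have h1 : Continuous fun x : ℝ => x ^ (2*τ) := Real.continuous_rpow_const (by linarith)
  have h2 : Continuous fun x : ℝ => (1-x) ^ τ :=
    (Real.continuous_rpow_const h0.le).comp (continuous_const.sub continuous_id)
  exact (h1.add h2).sub continuous_const

lemma F_deriv {τ : ℝ} : ∀ x ∈ Ioo (0:ℝ) 1, HasDerivAt (F τ) (F1 τ x) x := by
  intro x hx
  have hx1 : (1:ℝ) - x ≠ 0 := by have := hx.2; intro h; linarith
  have d1 : HasDerivAt (fun x : ℝ => x ^ (2*τ)) (2*τ * x ^ (2*τ-1)) x :=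
    Real.hasDerivAt_rpow_const (Or.inl (ne_of_gt hx.1))
  have dlin : HasDerivAt (fun x : ℝ => 1 - x) (-1) x := by
    simpa using (hasDerivAt_id x).const_sub 1
  have d2 : HasDerivAt (fun x : ℝ => (1-x) ^ τ) ((-1) * τ * (1-x) ^ (τ-1)) x :=
    dlin.rpow_const (Or.inl hx1)
  have := (d1.add d2).sub_const 1
  exact this.congr_deriv (by unfold F1; ring)

lemma F1_deriv {τ : ℝ} : ∀ x ∈ Ioo (0:ℝ) 1, HasDerivAt (F1 τ) (F2 τ x) x := by
  intro x hx
  have hx1 : (1:ℝ) - x ≠ 0 := by have := hx.2; intro h; linarith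
  have d1 : HasDerivAt (fun x : ℝ => 2*τ * x ^ (2*τ-1)) (2*τ * ((2*τ-1) * x ^ (2*τ-1-1))) x :=
    (Real.hasDerivAt_rpow_const (Or.inl (ne_of_gt hx.1))).const_mul (2*τ)
  have dlin : HasDerivAt (fun x : ℝ => 1 - x) (-1) x := by
    simpa using (hasDerivAt_id x).const_sub 1
  have d2 : HasDerivAt (fun x : ℝ => τ * (1-x) ^ (τ-1)) (τ * ((-1) * (τ-1) * (1-x) ^ (τ-1-1))) x :=
    (dlin.rpow_const (Or.inl hx1)).const_mul τ
  have := d1.sub d2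
  have e1 : 2*τ-1-1 = 2*τ-2 := by ring
  have e2 : τ-1-1 = τ-2 := by ring
  rw [e1, e2] at this
  exact this.congr_deriv (by unfold F2; ring)

lemma F2_anti {τ : ℝ} (hτ₁ : 1/2 < τ) (hτ₂ : τ < 1) : StrictAntiOn (F2 τ) (Ioo (0:ℝ) 1) := by
  intro x hx y hy hxy
  have hA : 0 < 2*τ*(2*τ-1) := by nlinarith
  have hB : τ*(τ-1) < 0 := by nlinarith
  have h1 : y ^ (2*τ-2) < x ^ (2*τ-2) :=
    Real.rpow_lt_rpow_of_neg hx.1 hxy (by linarith)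
  have h2 : (1-x) ^ (τ-2) < (1-y) ^ (τ-2) :=
    Real.rpow_lt_rpow_of_neg (by have := hy.2; linarith) (by linarith) (by linarith)
  have t1 := mul_lt_mul_of_pos_left h1 hA
  have t2 := mul_lt_mul_of_neg_left h2 hB
  unfold F2
  linarith

theorem stmt10 (M : ℕ) (hM : 2 ≤ M) (τ : ℝ) (hτ₁ : 1 / 2 < τ) (hτ₂ : τ < 1)
    (hτ : (1 / M : ℝ) ^ (2 * τ) + ((M - 1 : ℝ) / M) ^ τ = 1) :
    ∀ x : ℝ, 1 / M ≤ x → x ≤ 1 → 0 ≤ x ^ (2 * τ) + (1 - x) ^ τ - 1 := by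
  intro x hx1 hx2
  have hτ0 : 0 < τ := by linarith
  have hM2 : (2:ℝ) ≤ (M:ℝ) := by exact_mod_cast hM
  set a : ℝ := 1 / (M:ℝ) with ha_def
  have ha0 : 0 < a := by positivity
  have ha1 : a < 1 := by
    rw [ha_def, div_lt_one (by linarith)]; linarith
  have hFa : F τ a = 0 := by
    have hMne : (M:ℝ) ≠ 0 := by linarith
    have : ((M:ℝ) - 1) / M = 1 - a := by
      rw [ha_def]; field_simp
    unfold F
    rw [ha_def] at *
    rw [← this]
    linarith [hτ]
  have hF0 : F τ 0 = 0 := by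
    unfold F
    rw [Real.zero_rpow (by linarith), sub_zero, Real.one_rpow]; ring
  have hF1 : F τ 1 = 0 := by
    unfold F
    rw [Real.one_rpow, sub_self, Real.zero_rpow (by linarith)]; ring
  show 0 ≤ F τ x
  by_contra h
  push_neg at h
  have hxa : a < x := lt_of_le_of_ne hx1 (fun he => by rw [he] at hFa; linarith)
  have hx1' : x < 1 := lt_of_le_of_ne hx2 (fun he => by rw [he] at h; linarith)
  -- find y ∈ (x,1) with F τ y > 0
  set c : ℝ := (2:ℝ) ^ ((τ-1)⁻¹) with hc_def
  have hc0 : 0 < c := Real.rpow_pos_of_pos (by norm_num) _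
  set b : ℝ := min (1-x) c / 2 with hb_def
  have hb0 : 0 < b := by
    apply div_pos _ (by norm_num)
    exact lt_min (by linarith) hc0
  have hbx : b < 1 - x := by
    have : min (1-x) c ≤ 1-x := min_le_left _ _
    rw [hb_def]; linarith
  have hbc : b < c := by
    have : min (1-x) c ≤ c := min_le_right _ _
    rw [hb_def]; linarith
  have hb1 : b < 1 := by linarith
  have hcpow : c ^ (τ-1) = 2 := by
    rw [hc_def, ← Real.rpow_mul (by norm_num), inv_mul_cancel₀ (by intro he; apply absurd he; intro he2; linarith : τ-1 ≠ 0), Real.rpow_one]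
  have hbpow : 2 < b ^ (τ-1) := by
    have := Real.rpow_lt_rpow_of_neg hb0 hbc (by linarith : τ-1 < 0)
    rw [hcpow] at this; exact this
  set y : ℝ := 1 - b with hy_def
  have hxy : x < y := by rw [hy_def]; linarith
  have hy1 : y < 1 := by rw [hy_def]; linarith
  have hFy : 0 < F τ y := by
    have hbern : 1 + (2*τ) * (-b) ≤ (1 + (-b)) ^ (2*τ) :=
      one_add_mul_self_le_rpow_one_add (by linarith) (by linarith)
    have hbτ : b ^ τ = b * b ^ (τ-1) := by
      nth_rewrite 1 [show τ = 1 + (τ-1) by ring]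
      rw [Real.rpow_add hb0, Real.rpow_one]
    have h1y : (1:ℝ) - y = b := by rw [hy_def]; ring
    unfold F
    rw [h1y, hbτ]
    have : (1 + (-b)) = y := by rw [hy_def]; ring
    rw [this] at hbern
    nlinarith [hbpow, hb0]
  -- IVT gives a zero z ∈ (x, y)
  obtain ⟨z, hz, hFz⟩ : ∃ z ∈ Ioo x y, F τ z = 0 := by
    have hcont := (F_cont hτ0).continuousOn (s := Icc x y)
    have h0mem : (0:ℝ) ∈ Ioo (F τ x) (F τ y) := ⟨h, hFy⟩
    have := intermediate_value_Ioo (le_of_lt hxy) hcont h0mem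
    obtain ⟨z, hz, hFz⟩ := this
    exact ⟨z, hz, hFz⟩
  -- Rolle three times
  have hderiv : ∀ s t : ℝ, 0 ≤ s → t ≤ 1 → ∀ u ∈ Ioo s t, HasDerivAt (F τ) (F1 τ u) u := by
    intro s t hs ht u hu
    exact F_deriv u ⟨lt_of_le_of_lt hs hu.1, lt_of_lt_of_le hu.2 ht⟩
  obtain ⟨c1, hc1, hFc1⟩ := exists_hasDerivAt_eq_zero ha0 ((F_cont hτ0).continuousOn)
    (hF0.trans hFa.symm) (hderiv 0 a le_rfl ha1.le)
  obtain ⟨c2, hc2, hFc2⟩ := exists_hasDerivAt_eq_zero (lt_trans hxa hz.1 : a < z)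
    ((F_cont hτ0).continuousOn) (hFa.trans hFz.symm)
    (hderiv a z ha0.le (by linarith [hz.2, hy1]))
  obtain ⟨c3, hc3, hFc3⟩ := exists_hasDerivAt_eq_zero (by linarith [hz.2, hy1] : z < 1)
    ((F_cont hτ0).continuousOn) (hFz.trans hF1.symm)
    (hderiv z 1 (by linarith [hxa, hz.1, ha0]) le_rfl)
  have hc1mem : c1 ∈ Ioo (0:ℝ) 1 := ⟨hc1.1, by linarith [hc1.2, hxa, hz.1, hz.2, hy1]⟩
  have hc2mem : c2 ∈ Ioo (0:ℝ) 1 := ⟨by linarith [hc2.1, ha0], by linarith [hc2.2, hz.2, hy1]⟩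
  have hc3mem : c3 ∈ Ioo (0:ℝ) 1 :=
    ⟨by linarith [hc3.1, hz.1, hxa, ha0], hc3.2⟩
  have hF1cont : ∀ s t : ℝ, 0 < s → t < 1 → ContinuousOn (F1 τ) (Icc s t) := by
    intro s t hs ht u hu
    exact ((F1_deriv u ⟨lt_of_lt_of_le hs hu.1, lt_of_le_of_lt hu.2 ht⟩).continuousAt).continuousWithinAt
  have hF1d : ∀ s t : ℝ, 0 < s → t < 1 → ∀ u ∈ Ioo s t, HasDerivAt (F1 τ) (F2 τ u) u := by
    intro s t hs ht u hu
    exact F1_deriv u ⟨lt_trans hs hu.1, lt_trans hu.2 ht⟩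
  obtain ⟨d1, hd1, hFd1⟩ := exists_hasDerivAt_eq_zero (lt_trans hc1.2 hc2.1 : c1 < c2)
    (hF1cont c1 c2 hc1mem.1 hc2mem.2) (hFc1.trans hFc2.symm)
    (hF1d c1 c2 hc1mem.1 hc2mem.2)
  obtain ⟨d2, hd2, hFd2⟩ := exists_hasDerivAt_eq_zero (lt_trans hc2.2 hc3.1 : c2 < c3)
    (hF1cont c2 c3 hc2mem.1 hc3mem.2) (hFc2.trans hFc3.symm)
    (hF1d c2 c3 hc2mem.1 hc3mem.2)
  have hd1mem : d1 ∈ Ioo (0:ℝ) 1 := ⟨lt_trans hc1mem.1 hd1.1, lt_trans hd1.2 hc2mem.2⟩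
  have hd2mem : d2 ∈ Ioo (0:ℝ) 1 := ⟨lt_trans hc2mem.1 hd2.1, lt_trans hd2.2 hc3mem.2⟩
  have := F2_anti hτ₁ hτ₂ hd1mem hd2mem (lt_trans hd1.2 hd2.1)
  rw [hFd1, hFd2] at this
  exact lt_irrefl 0 this
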